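/- Let H be a positive self-adjoint operator on a finite-dimensional Hilbert space with kernel projection P, and suppose λ⟨φ,(1-P)φ⟩ ≤ ⟨φ,Hφ⟩ for all φ and some λ > 0 (spectral gap inequality). Let L be a bounded operator with LP = PL = P, ‖L‖ ≤ 1, and suppose the detectability bound ⟨Lφ, H Lφ⟩ ≤ g²(‖φ‖² - ‖Lφ‖²) holds for all φ and some g > 0. Then ‖L(1-P)‖² ≤ 1/(1 + λ/g²). -/

import Mathlib

/-- Detectability Lemma corollary: finite-dimensional setting, `T ≥ 0`
self-adjoint with kernel projection `P`, spectral gap `λ`, `L` a contraction with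
`LP = PL = P` satisfying the detectability bound `⟨Lφ,T Lφ⟩ ≤ g²(‖φ‖²-‖Lφ‖²)`.
Then `‖L(1-P)‖² ≤ 1/(1+λ/g²)`. -/
theorem stmt_7 {H : Type*} [NormedAddCommGroup H] [InnerProductSpace ℂ H]
    [FiniteDimensional ℂ H]
    (T : H →L[ℂ] H) (hT : T.IsPositive)
    (P : H →L[ℂ] H) (hP : IsSelfAdjoint P) (hPidem : P * P = P)
    (hker : LinearMap.ker (T : H →ₗ[ℂ] H) = LinearMap.range (P : H →ₗ[ℂ] H))
    (lam : ℝ) (hlam : 0 < lam)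
    (hgap : ∀ φ : H, lam * ((1 - P).reApplyInnerSelf φ) ≤ T.reApplyInnerSelf φ)
    (L : H →L[ℂ] H) (hL : ‖L‖ ≤ 1) (h1 : L * P = P) (h2 : P * L = P)
    (g : ℝ) (hg : 0 < g)
    (hdl : ∀ φ : H, T.reApplyInnerSelf (L φ) ≤ g ^ 2 * (‖φ‖ ^ 2 - ‖L φ‖ ^ 2)) :
    ‖L * (1 - P)‖ ^ 2 ≤ 1 / (1 + lam / g ^ 2) := by
  set c : ℝ := 1 / (1 + lam / g ^ 2) with hc
  have hg2 : (0:ℝ) < g ^ 2 := by positivity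
  have hden : 0 < 1 + lam / g ^ 2 := by positivity
  have hc0 : 0 ≤ c := by positivity
  -- pointwise bound
  have key : ∀ φ : H, ‖(L * (1 - P)) φ‖ ^ 2 ≤ c * ‖φ‖ ^ 2 := by
    intro φ
    set ψ := (1 - P) φ with hψ
    have hPψ : P ψ = 0 := by
      have : (P * (1 - P)) φ = 0 := by
        rw [mul_sub, mul_one, hPidem, sub_self]; rfl
      simpa [hψ] using this
    have hPLψ : P (L ψ) = 0 := by
      have : (P * L) ψ = P ψ := by rw [h2]
      simpa [hPψ] using this
    -- ‖ψ‖ ≤ ‖φ‖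
    have hψle : ‖ψ‖ ≤ ‖φ‖ := by
      have hinner : (inner ℂ ψ ψ : ℂ) = inner ℂ φ ψ := by
        have h1p : ((1:H →L[ℂ] H) - P) φ = φ - P φ := rfl
        calc (inner ℂ ψ ψ : ℂ) = inner ℂ (φ - P φ) ψ := by rw [hψ, h1p]
          _ = inner ℂ φ ψ - inner ℂ (P φ) ψ := by rw [inner_sub_left]
          _ = inner ℂ φ ψ - inner ℂ φ (P ψ) :=
              congrArg (fun z => (inner ℂ φ ψ : ℂ) - z) (hP.isSymmetric φ ψ)
          _ = inner ℂ φ ψ := by rw [hPψ, inner_zero_right, sub_zero]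
      have h2' : ‖ψ‖ ^ 2 = RCLike.re (inner ℂ φ ψ : ℂ) := by
        rw [← hinner]; exact (inner_self_eq_norm_sq ψ).symm
      have h3' : RCLike.re (inner ℂ φ ψ : ℂ) ≤ ‖φ‖ * ‖ψ‖ := re_inner_le_norm φ ψ
      nlinarith [norm_nonneg ψ, norm_nonneg φ]
    -- reApplyInnerSelf of (1-P) at Lψ
    have hre : (1 - P).reApplyInnerSelf (L ψ) = ‖L ψ‖ ^ 2 := by
      have : ((1:H →L[ℂ] H) - P) (L ψ) = L ψ := by
        have : ((1:H →L[ℂ] H) - P) (L ψ) = L ψ - P (L ψ) := rfl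
        rw [this, hPLψ, sub_zero]
      rw [ContinuousLinearMap.reApplyInnerSelf_apply, this]
      exact inner_self_eq_norm_sq (L ψ)
    have hchain : lam * ‖L ψ‖ ^ 2 ≤ g ^ 2 * (‖ψ‖ ^ 2 - ‖L ψ‖ ^ 2) := by
      have := (hgap (L ψ)).trans (hdl ψ)
      rwa [hre] at this
    have hLψ : ‖L ψ‖ ^ 2 ≤ c * ‖ψ‖ ^ 2 := by
      rw [hc, div_mul_eq_mul_div, le_div_iff₀ hden]
      have hdiv : lam / g ^ 2 * g ^ 2 = lam := div_mul_cancel₀ _ (ne_of_gt hg2)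
      nlinarith [hchain, hdiv, hg2]
    have heq : (L * (1 - P)) φ = L ψ := rfl
    rw [heq]
    calc ‖L ψ‖ ^ 2 ≤ c * ‖ψ‖ ^ 2 := hLψ
      _ ≤ c * ‖φ‖ ^ 2 := by
          apply mul_le_mul_of_nonneg_left _ hc0
          exact pow_le_pow_left₀ (norm_nonneg _) hψle 2
  -- conclude operator norm bound
  have hop : ‖L * (1 - P)‖ ≤ Real.sqrt c := by
    apply ContinuousLinearMap.opNorm_le_bound _ (Real.sqrt_nonneg c)
    intro x
    have := key x
    have h' : ‖(L * (1 - P)) x‖ ^ 2 ≤ (Real.sqrt c * ‖x‖) ^ 2 := by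
      rw [mul_pow, Real.sq_sqrt hc0]; exact this
    calc ‖(L * (1 - P)) x‖ = Real.sqrt (‖(L * (1 - P)) x‖ ^ 2) := by
          rw [Real.sqrt_sq (norm_nonneg _)]
      _ ≤ Real.sqrt ((Real.sqrt c * ‖x‖) ^ 2) := Real.sqrt_le_sqrt h'
      _ = Real.sqrt c * ‖x‖ := Real.sqrt_sq (by positivity)
  calc ‖L * (1 - P)‖ ^ 2 ≤ Real.sqrt c ^ 2 := pow_le_pow_left₀ (norm_nonneg _) hop 2
    _ = c := Real.sq_sqrt hc0
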